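/- If Φ is true, then no state with status UNSAT is reachable from the initial state via the transition rules of basic Incremental Determinization together with the rules InductiveRefinement and Failed. -/

import Mathlib

/-! Basic framework: variables are `X ⊕ Y` where `X` are the universal and
`Y` the existential variables (this makes `X` and `Y` disjoint by construction). -/

/-- A literal: a variable together with a polarity. -/
abbrev Lit (X Y : Type) := (X ⊕ Y) × Bool

/-- A clause is a finite set of literals. -/
abbrev Clause (X Y : Type) := Finset (Lit X Y)

/-- A (total) assignment to all variables. Assignments "to a set `D` of variables"
are modelled as total assignments; all notions below only inspect the relevant variables. -/
abbrev Assn (X Y : Type) := (X ⊕ Y) → Bool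

/-- An assignment satisfies a literal if it maps its variable to its polarity. -/
def satLit {X Y : Type} (σ : Assn X Y) (l : Lit X Y) : Prop := σ l.1 = l.2

/-- An assignment satisfies a clause if it satisfies at least one of its literals. -/
def satClause {X Y : Type} (σ : Assn X Y) (c : Clause X Y) : Prop := ∃ l ∈ c, satLit σ l

/-- An assignment satisfies a clause set if it satisfies every clause in it. -/
def satCnf {X Y : Type} (σ : Assn X Y) (ψ : Set (Clause X Y)) : Prop := ∀ c ∈ ψ, satClause σ c

/-- The combined assignment `(xa, ya)`. -/
def combine {X Y : Type} (xa : X → Bool) (ya : Y → Bool) : Assn X Y := Sum.elim xa ya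

/-- The restriction of an assignment to the universal variables `X`. -/
def restrX {X Y : Type} (σ : Assn X Y) : X → Bool := fun x => σ (Sum.inl x)

/-- Truth of the 2QBF `∀X.∃Y.φ`: there is a Skolem function `f` such that for every
assignment `xa` to `X` the combined assignment `(xa, f(xa))` satisfies `φ`. -/
def qbfTrue {X Y : Type} (φ : Set (Clause X Y)) : Prop :=
  ∃ f : (X → Bool) → (Y → Bool), ∀ xa : X → Bool, satCnf (combine xa (f xa)) φ

/-- `v` has a unique Skolem function for domain `χ` in `ψ`: for every assignment `xa` to `X`
satisfying `χ` there is exactly one Boolean `b` such that some assignment `ya` to the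
existential variables with `ya v = b` makes `(xa, ya)` satisfy `ψ`. -/
def uniqueSkolem {X Y : Type} (ψ : Set (Clause X Y)) (χ : (X → Bool) → Prop) (v : Y) : Prop :=
  ∀ xa : X → Bool, χ xa →
    ∃! b : Bool, ∃ ya : Y → Bool, ya v = b ∧ satCnf (combine xa ya) ψ

/-- `C|_D`: the clauses of `C` all of whose variables lie in `D`. -/
def restrictC {X Y : Type} (C : Set (Clause X Y)) (D : Set (X ⊕ Y)) : Set (Clause X Y) :=
  {c ∈ C | ∀ l ∈ c, l.1 ∈ D}

/-- Clause `c` has unique consequence `v` relative to `D`: it contains a literal of `v`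
and all its other literals are of variables in `D`. -/
def hasUC {X Y : Type} (c : Clause X Y) (v : Y) (D : Set (X ⊕ Y)) : Prop :=
  (∃ b : Bool, (Sum.inr v, b) ∈ c) ∧ ∀ l ∈ c, l.1 ≠ Sum.inr v → l.1 ∈ D

/-- `U_v`: the clauses of `C` with unique consequence `v` relative to `D`. -/
def UC {X Y : Type} (C : Set (Clause X Y)) (v : Y) (D : Set (X ⊕ Y)) : Set (Clause X Y) :=
  {c ∈ C | hasUC c v D}

/-- `A_(v,b)`: some clause `c` in `U_v` contains the literal `(v, b)` and the assignment
falsifies every literal of `c` other than the literals of `v`. -/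
def Ant {X Y : Type} (C : Set (Clause X Y)) (v : Y) (D : Set (X ⊕ Y)) (b : Bool)
    (σ : Assn X Y) : Prop :=
  ∃ c ∈ UC C v D, (Sum.inr v, b) ∈ c ∧ ∀ l ∈ c, l.1 ≠ Sum.inr v → ¬ satLit σ l

/-- `deterministic(v, C, χ, D)`. -/
def deterministic {X Y : Type} (v : Y) (C : Set (Clause X Y)) (χ : (X → Bool) → Prop)
    (D : Set (X ⊕ Y)) : Prop :=
  ∀ σ : Assn X Y, satCnf σ (restrictC C D) → χ (restrX σ) →
    Ant C v D true σ ∨ Ant C v D false σ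

/-- `unconflicted(v, C, χ, D)`. -/
def unconflicted {X Y : Type} (v : Y) (C : Set (Clause X Y)) (χ : (X → Bool) → Prop)
    (D : Set (X ⊕ Y)) : Prop :=
  ∀ σ : Assn X Y, satCnf σ (restrictC C D) → χ (restrX σ) →
    ¬ (Ant C v D true σ ∧ Ant C v D false σ)

/-- `v` has a unique Skolem function relative to `D` for domain `χ` in `C`: for every
assignment to `D` satisfying `C|_D` whose restriction to `X` satisfies `χ`, there is exactly
one Boolean `b` such that extending the assignment by `v ↦ b` satisfies every clause of `U_v`. -/
def uniqueSkolemRel {X Y : Type} [DecidableEq X] [DecidableEq Y] (v : Y)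
    (C : Set (Clause X Y)) (χ : (X → Bool) → Prop) (D : Set (X ⊕ Y)) : Prop :=
  ∀ σ : Assn X Y, satCnf σ (restrictC C D) → χ (restrX σ) →
    ∃! b : Bool, satCnf (Function.update σ (Sum.inr v) b) (UC C v D)

/-! The state of the Incremental Determinization solver. -/

/-- The solver status. -/
inductive Status (X Y : Type) where
  | ready : Status X Y
  | conflict (L : Clause X Y) (d : Assn X Y) : Status X Y
  | sat : Status X Y
  | unsat : Status X Y

/-- A solver state `(S, C, D, χ, α)`: a status, a stack of clause sets, a stack of sets of
variables, and two predicates on assignments to `X`. -/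
structure IDState (X Y : Type) where
  status : Status X Y
  C : List (Set (Clause X Y))
  D : List (Set (X ⊕ Y))
  chi : (X → Bool) → Prop
  alpha : (X → Bool) → Prop

/-- The union of the elements of a stack of sets. -/
def stackUnion {β : Type} (S : List (Set β)) : Set β := {x | ∃ s ∈ S, x ∈ s}

/-- The first element (index 0) of a stack of sets. -/
def first {β : Type} (S : List (Set β)) : Set β := S.getD 0 ∅

/-- Add an element to the last set of a stack. -/
def addLast {β : Type} : List (Set β) → β → List (Set β)
  | [], v => [{v}]
  | [s], v => [insert v s]
  | s :: t :: rest, v => s :: addLast (t :: rest) v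

/-- Add an element to the first set of a stack. -/
def addFirst {β : Type} : List (Set β) → β → List (Set β)
  | [], x => [{x}]
  | s :: rest, x => insert x s :: rest

/-- The initial state `(Ready, ⟨φ⟩, ⟨X⟩, ⊤, ⊤)`. -/
def initState {X Y : Type} (φ : Set (Clause X Y)) : IDState X Y :=
  ⟨Status.ready, [φ], [Set.range Sum.inl], fun _ => True, fun _ => True⟩

/-- Basic Incremental Determinization extended by the rules InductiveRefinement and Failed. -/
inductive StepIRF {X Y : Type} [DecidableEq X] [DecidableEq Y] (φ : Set (Clause X Y)) :
    IDState X Y → IDState X Y → Prop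

  | propagate (C : List (Set (Clause X Y))) (D : List (Set (X ⊕ Y)))
      (χ α : (X → Bool) → Prop) (v : Y)
      (hv : Sum.inr v ∉ stackUnion D)
      (hdet : deterministic v (stackUnion C) (fun xa => χ xa ∧ α xa) (stackUnion D))
      (hunc : unconflicted v (stackUnion C) (fun xa => χ xa ∧ α xa) (stackUnion D)) :
      StepIRF φ ⟨Status.ready, C, D, χ, α⟩ ⟨Status.ready, C, addLast D (Sum.inr v), χ, α⟩
  | decide (C : List (Set (Clause X Y))) (D : List (Set (X ⊕ Y)))
      (χ α : (X → Bool) → Prop) (v : Y) (δ : Set (Clause X Y))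
      (hv : Sum.inr v ∉ stackUnion D) (hδfin : δ.Finite)
      (hδ : ∀ c ∈ δ, hasUC c v (stackUnion D)) :
      StepIRF φ ⟨Status.ready, C, D, χ, α⟩ ⟨Status.ready, C ++ [δ], D ++ [∅], χ, α⟩
  | sat (C : List (Set (Clause X Y))) (D : List (Set (X ⊕ Y)))
      (χ : (X → Bool) → Prop)
      (hD : stackUnion D = Set.univ) :
      StepIRF φ ⟨Status.ready, C, D, χ, fun _ => True⟩ ⟨Status.sat, C, D, χ, fun _ => True⟩
  | conflict (C : List (Set (Clause X Y))) (D : List (Set (X ⊕ Y)))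
      (χ α : (X → Bool) → Prop) (v : Y) (σ : Assn X Y)
      (hv : Sum.inr v ∉ stackUnion D)
      (hsat : satCnf σ (restrictC (stackUnion C) (stackUnion D)))
      (hχ : χ (restrX σ)) (hα : α (restrX σ))
      (ht : Ant (stackUnion C) v (stackUnion D) true σ)
      (hf : Ant (stackUnion C) v (stackUnion D) false σ) :
      StepIRF φ ⟨Status.ready, C, D, χ, α⟩
        ⟨Status.conflict {(Sum.inr v, true), (Sum.inr v, false)} σ, C, D, χ, α⟩
  | analyze (C : List (Set (Clause X Y))) (D : List (Set (X ⊕ Y)))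
      (χ α : (X → Bool) → Prop) (L : Clause X Y) (σ : Assn X Y)
      (c : Clause X Y) (l : Lit X Y)
      (hc : c ∈ first C) (hl : l ∈ L) (hlc : (l.1, !l.2) ∈ c) :
      StepIRF φ ⟨Status.conflict L σ, C, D, χ, α⟩
        ⟨Status.conflict (L.erase l ∪ c.erase (l.1, !l.2)) σ, C, D, χ, α⟩
  | learn (C : List (Set (Clause X Y))) (D : List (Set (X ⊕ Y)))
      (χ α : (X → Bool) → Prop) (L : Clause X Y) (σ : Assn X Y)
      (h : ∃ l ∈ L, l.1 ∉ stackUnion D) :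
      StepIRF φ ⟨Status.conflict L σ, C, D, χ, α⟩ ⟨Status.ready, addFirst C L, D, χ, α⟩
  | unsat (C : List (Set (Clause X Y))) (D : List (Set (X ⊕ Y)))
      (χ α : (X → Bool) → Prop) (L : Clause X Y) (σ : Assn X Y)
      (hvars : ∀ l ∈ L, l.1 ∈ first D)
      (hfals : ∀ l ∈ L, ¬ satLit σ l) :
      StepIRF φ ⟨Status.conflict L σ, C, D, χ, α⟩ ⟨Status.unsat, C, D, χ, α⟩
  | backtrack (S : Status X Y) (C : List (Set (Clause X Y))) (D : List (Set (X ⊕ Y)))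
      (χ α : (X → Bool) → Prop) (k : ℕ) (h0 : 0 < k) (hk : k ≤ C.length) :
      StepIRF φ ⟨S, C, D, χ, α⟩ ⟨S, C.take k, D.take k, χ, α⟩
  | inductiveRefinement (C : List (Set (Clause X Y))) (D : List (Set (X ⊕ Y)))
      (χ α : (X → Bool) → Prop) (L : Clause X Y) (σ : Assn X Y) (ya : Y → Bool)
      (h : satCnf (combine (restrX σ) ya) φ) :
      StepIRF φ ⟨Status.conflict L σ, C, D, χ, α⟩
        ⟨Status.conflict L σ, C, D, fun xa => χ xa ∧ ¬ satCnf (combine xa ya) φ, α⟩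
  | failed (C : List (Set (Clause X Y))) (D : List (Set (X ⊕ Y)))
      (χ α : (X → Bool) → Prop) (L : Clause X Y) (σ : Assn X Y)
      (h : ∀ ya : Y → Bool, ¬ satCnf (combine (restrX σ) ya) φ) :
      StepIRF φ ⟨Status.conflict L σ, C, D, χ, α⟩ ⟨Status.unsat, C, D, χ, α⟩

/-- Reachability from the initial state via basic ID plus InductiveRefinement and Failed. -/
def ReachableIRF {X Y : Type} [DecidableEq X] [DecidableEq Y] (φ : Set (Clause X Y))
    (s : IDState X Y) : Prop :=
  Relation.ReflTransGen (StepIRF φ) (initState φ) s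

/-! ### Soundness proof -/

section SoundnessAux

variable {X Y : Type}

lemma satCnf_mono' {σ : Assn X Y} {ψ ψ' : Set (Clause X Y)} (h : ψ ⊆ ψ')
    (hs : satCnf σ ψ') : satCnf σ ψ := fun c hc => hs c (h hc)

lemma restrictC_mono' {C C' : Set (Clause X Y)} {D D' : Set (X ⊕ Y)}
    (hC : C ⊆ C') (hD : D ⊆ D') : restrictC C D ⊆ restrictC C' D' := by
  intro c hc
  exact ⟨hC hc.1, fun l hl => hD (hc.2 l hl)⟩

lemma restrictC_subset' (C : Set (Clause X Y)) (D : Set (X ⊕ Y)) : restrictC C D ⊆ C :=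
  fun _ hc => hc.1

lemma first_mem' {β : Type} {l : List (Set β)} (h : l ≠ []) : first l ∈ l := by
  cases l with
  | nil => exact absurd rfl h
  | cons a t => exact List.mem_cons_self

lemma first_subset_stackUnion' {β : Type} {l : List (Set β)} (h : l ≠ []) :
    first l ⊆ stackUnion l := fun x hx => ⟨first l, first_mem' h, hx⟩

lemma stackUnion_singleton' {β : Type} (s : Set β) : stackUnion [s] = s := by
  ext x
  constructor
  · rintro ⟨t, ht, hx⟩
    simp only [List.mem_singleton] at ht
    subst ht; exact hx
  · intro hx
    exact ⟨s, by simp, hx⟩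

lemma addLast_length' {β : Type} : ∀ (l : List (Set β)) (v : β), l ≠ [] →
    (addLast l v).length = l.length
  | [_], _, _ => rfl
  | s :: t :: r, v, _ => by
      show (s :: addLast (t :: r) v).length = (s :: t :: r).length
      simp [addLast_length' (t :: r) v (by simp)]

lemma UC_subset_restrict' {C : Set (Clause X Y)} {D : Set (X ⊕ Y)} {v : Y} :
    UC C v D ⊆ restrictC C (insert (Sum.inr v) D) := by
  intro c hc
  refine ⟨hc.1, fun l hl => ?_⟩
  by_cases h : l.1 = Sum.inr v
  · rw [h]; exact Set.mem_insert _ _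
  · exact Set.mem_insert_of_mem _ (hc.2.2 l hl h)

lemma Ant_congr' {C : Set (Clause X Y)} {D : Set (X ⊕ Y)} {v : Y} {b : Bool}
    {σ σ' : Assn X Y} (hag : ∀ w ∈ D, σ w = σ' w) (h : Ant C v D b σ) :
    Ant C v D b σ' := by
  obtain ⟨c, hcUC, hvb, hfals⟩ := h
  refine ⟨c, hcUC, hvb, fun l hl hlv hsat => hfals l hl hlv ?_⟩
  have hD : l.1 ∈ D := hcUC.2.2 l hl hlv
  unfold satLit at hsat ⊢
  rw [hag l.1 hD]
  exact hsat

lemma forceVal' {C : Set (Clause X Y)} {χα : (X → Bool) → Prop}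
    {D : Set (X ⊕ Y)} {v : Y} {b : Bool} {σ : Assn X Y}
    (hunc : unconflicted v C χα D)
    (hσD : satCnf σ (restrictC C D)) (hχ : χα (restrX σ))
    (hAnt : Ant C v D b σ)
    (hsatUC : ∀ c ∈ UC C v D, satClause σ c) :
    σ (Sum.inr v) = b := by
  obtain ⟨c, hcUC, hvb, hfals⟩ := hAnt
  obtain ⟨⟨w, pb⟩, hl, hsatl⟩ := hsatUC c hcUC
  by_cases hlv : w = Sum.inr v
  · subst hlv
    have hσv : σ (Sum.inr v) = pb := hsatl
    by_cases hb : pb = b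
    · rw [hσv]; exact hb
    · exfalso
      have hpb : pb = !b := by cases pb <;> cases b <;> simp_all
      subst hpb
      have hA1 : Ant C v D b σ := ⟨c, hcUC, hvb, hfals⟩
      have hA2 : Ant C v D (!b) σ := ⟨c, hcUC, hl, hfals⟩
      cases b
      · exact hunc σ hσD hχ ⟨hA2, hA1⟩
      · exact hunc σ hσD hχ ⟨hA1, hA2⟩
  · exact absurd hsatl (hfals ⟨w, pb⟩ hl hlv)

/-- The soundness invariant for reachable states: stacks are nonempty and of equal length,
`α` is trivial, the Skolem function satisfies all level-0 clauses, level-0 existential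
variables are forced to the Skolem value, the status is not UNSAT, and in a conflict state
the conflict clause is implied by the level-0 clauses and the conflict assignment agrees
with the Skolem function on level-0 existential variables. -/
structure IDInv {X Y : Type} (f : (X → Bool) → (Y → Bool)) (s : IDState X Y) : Prop where
  lenC : s.C ≠ []
  lenD : s.D ≠ []
  len_eq : s.C.length = s.D.length
  alpha_top : ∀ xa, s.alpha xa
  skolem : ∀ xa, satCnf (combine xa (f xa)) (first s.C)
  det0 : ∀ v : Y, Sum.inr v ∈ first s.D →
     ∀ σ : Assn X Y, satCnf σ (restrictC (first s.C) (first s.D)) → s.chi (restrX σ) →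
       σ (Sum.inr v) = f (restrX σ) v
  notUnsat : s.status ≠ Status.unsat
  confl : ∀ L σ, s.status = Status.conflict L σ →
      (∀ σ' : Assn X Y, satCnf σ' (first s.C) → satClause σ' L) ∧
      (∀ v : Y, Sum.inr v ∈ first s.D → σ (Sum.inr v) = f (restrX σ) v)

lemma inv_step {X Y : Type} [DecidableEq X] [DecidableEq Y] {φ : Set (Clause X Y)}
    {f : (X → Bool) → (Y → Bool)} (hf : ∀ xa, satCnf (combine xa (f xa)) φ)
    {s t : IDState X Y} (h : StepIRF φ s t) (ih : IDInv f s) : IDInv f t := by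
  cases h with
  | propagate C D χ α v hv hdet hunc =>
    rcases C with _ | ⟨c0, cs⟩
    · exact absurd rfl ih.lenC
    rcases D with _ | ⟨d, ds⟩
    · exact absurd rfl ih.lenD
    rcases ds with _ | ⟨d2, ds⟩
    · -- level-0 propagation
      have hcs : cs = [] := by
        have h := ih.len_eq
        simp only [List.length_cons, List.length_nil] at h
        exact List.eq_nil_of_length_eq_zero (by omega)
      subst hcs
      rw [stackUnion_singleton', stackUnion_singleton'] at hdet hunc
      refine ⟨by simp, by simp [addLast], rfl, ih.alpha_top, ih.skolem, ?_,
        fun h => (by cases h), fun L σ h => (by cases h)⟩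
      intro w hw σ hσ hχ
      have hw' : Sum.inr w ∈ insert (Sum.inr v : X ⊕ Y) d := hw
      have hσ' : satCnf σ (restrictC c0 (insert (Sum.inr v) d)) := hσ
      have hσd : satCnf σ (restrictC c0 d) :=
        satCnf_mono' (restrictC_mono' (fun _ h => h) (Set.subset_insert _ _)) hσ'
      rcases Set.mem_insert_iff.mp hw' with heq | hmem
      · have hwv : w = v := Sum.inr.inj heq
        subst hwv
        have hs0 : satCnf (combine (restrX σ) (f (restrX σ))) c0 := ih.skolem (restrX σ)
        have hsD : satCnf (combine (restrX σ) (f (restrX σ))) (restrictC c0 d) :=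
          satCnf_mono' (restrictC_subset' _ _) hs0
        have hagree : ∀ u ∈ d, σ u = combine (restrX σ) (f (restrX σ)) u := by
          intro u hu
          cases u with
          | inl x => rfl
          | inr y => exact ih.det0 y hu σ hσd hχ
        have hχα : χ (restrX σ) ∧ α (restrX σ) := ⟨hχ, ih.alpha_top _⟩
        have hχαs : χ (restrX (combine (restrX σ) (f (restrX σ)))) ∧
            α (restrX (combine (restrX σ) (f (restrX σ)))) := hχα
        have hUCσ : ∀ c ∈ UC c0 w d, satClause σ c :=
          fun c hc => hσ' c (UC_subset_restrict' hc)
        have hUCσs : ∀ c ∈ UC c0 w d, satClause (combine (restrX σ) (f (restrX σ))) c :=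
          fun c hc => hs0 c hc.1
        have key : ∀ b : Bool, Ant c0 w d b σ → σ (Sum.inr w) = f (restrX σ) w := by
          intro b hA
          have h1 : σ (Sum.inr w) = b := forceVal' hunc hσd hχα hA hUCσ
          have h2 : combine (restrX σ) (f (restrX σ)) (Sum.inr w) = b :=
            forceVal' hunc hsD hχαs (Ant_congr' hagree hA) hUCσs
          rw [h1]
          exact h2.symm
        rcases hdet σ hσd hχα with hA | hA
        · exact key true hA
        · exact key false hA
      · exact ih.det0 w hmem σ hσd hχ
    · -- propagation at a higher level: level 0 is unchanged
      refine ⟨ih.lenC, by simp [addLast], ?_, ih.alpha_top, ih.skolem, ih.det0,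
        fun h => (by cases h), fun L σ h => (by cases h)⟩
      show (c0 :: cs).length = (addLast (d :: d2 :: ds) (Sum.inr v)).length
      rw [addLast_length' _ _ (by simp)]
      exact ih.len_eq
  | decide C D χ α v δ hv hδfin hδ =>
    rcases C with _ | ⟨c0, cs⟩
    · exact absurd rfl ih.lenC
    rcases D with _ | ⟨d, ds⟩
    · exact absurd rfl ih.lenD
    refine ⟨by simp, by simp, ?_, ih.alpha_top, ih.skolem, ih.det0,
      fun h => (by cases h), fun L σ h => (by cases h)⟩
    show ((c0 :: cs) ++ [δ]).length = ((d :: ds) ++ [∅]).length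
    have := ih.len_eq
    simp only [List.length_append, List.length_cons, List.length_nil] at this ⊢
    omega
  | sat C D χ hD =>
    exact ⟨ih.lenC, ih.lenD, ih.len_eq, ih.alpha_top, ih.skolem, ih.det0,
      fun h => (by cases h), fun L σ h => (by cases h)⟩
  | conflict C D χ α v σ hv hsat hχ hα ht hfa =>
    refine ⟨ih.lenC, ih.lenD, ih.len_eq, ih.alpha_top, ih.skolem, ih.det0,
      fun h => (by cases h), ?_⟩
    rintro L' σ' hLσ
    injection hLσ with h1 h2
    subst h1
    subst h2
    constructor
    · intro σ'' _
      cases hb : σ'' (Sum.inr v)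
      · exact ⟨(Sum.inr v, false), by simp, hb⟩
      · exact ⟨(Sum.inr v, true), by simp, hb⟩
    · intro w hw
      have hσ1 : satCnf σ (restrictC (first (C)) (first (D))) :=
        satCnf_mono' (restrictC_mono' (first_subset_stackUnion' ih.lenC)
          (first_subset_stackUnion' ih.lenD)) hsat
      exact ih.det0 w hw σ hσ1 hχ
  | analyze C D χ α L σ c l hc hl hlc =>
    obtain ⟨hLimp, hagr⟩ := ih.confl L σ rfl
    refine ⟨ih.lenC, ih.lenD, ih.len_eq, ih.alpha_top, ih.skolem, ih.det0,
      fun h => (by cases h), ?_⟩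
    rintro L' σ' hLσ
    injection hLσ with h1 h2
    subst h1
    subst h2
    refine ⟨?_, hagr⟩
    intro σ'' hσ''
    obtain ⟨m, hm, hsm⟩ := hLimp σ'' hσ''
    by_cases hml : m = l
    · subst hml
      obtain ⟨m', hm', hsm'⟩ := hσ'' c hc
      by_cases hm'' : m' = (m.1, !m.2)
      · exfalso
        subst hm''
        have h1 : σ'' m.1 = m.2 := hsm
        have h2 : σ'' m.1 = !m.2 := hsm'
        rw [h1] at h2
        exact absurd h2 (by simp)
      · exact ⟨m', Finset.mem_union_right _ (Finset.mem_erase.mpr ⟨hm'', hm'⟩), hsm'⟩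
    · exact ⟨m, Finset.mem_union_left _ (Finset.mem_erase.mpr ⟨hml, hm⟩), hsm⟩
  | learn C D χ α L σ hmem =>
    rcases C with _ | ⟨c0, cs⟩
    · exact absurd rfl ih.lenC
    obtain ⟨hLimp, _⟩ := ih.confl L σ rfl
    refine ⟨by simp [addFirst], ih.lenD, ih.len_eq, ih.alpha_top, ?_, ?_,
      fun h => (by cases h), fun L' σ' h => (by cases h)⟩
    · intro xa
      intro c hcmem
      have hcmem' : c ∈ insert L c0 := hcmem
      rcases Set.mem_insert_iff.mp hcmem' with rfl | hcc
      · exact hLimp _ (ih.skolem xa)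
      · exact ih.skolem xa c hcc
    · intro w hw σ' hσ' hχ'
      have hσ'' : satCnf σ' (restrictC (insert L c0) (first D)) := hσ'
      have hσd : satCnf σ' (restrictC c0 (first D)) :=
        satCnf_mono' (restrictC_mono' (Set.subset_insert _ _) (fun _ h => h)) hσ''
      exact ih.det0 w hw σ' hσd hχ'
  | unsat C D χ α L σ hvars hfals =>
    exfalso
    obtain ⟨hLimp, hagr⟩ := ih.confl L σ rfl
    obtain ⟨l, hl, hsl⟩ := hLimp (combine (restrX σ) (f (restrX σ))) (ih.skolem _)
    apply hfals l hl
    unfold satLit at hsl ⊢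
    rcases hw : l.1 with x | y
    · rw [hw] at hsl
      exact hsl
    · rw [hw] at hsl
      have hy : Sum.inr y ∈ first D := hw ▸ hvars l hl
      rw [hagr y hy]
      exact hsl
  | backtrack S C D χ α k h0 hk =>
    rcases C with _ | ⟨c0, cs⟩
    · exact absurd rfl ih.lenC
    rcases D with _ | ⟨d0, ds⟩
    · exact absurd rfl ih.lenD
    rcases k with _ | k
    · omega
    refine ⟨by simp, by simp, ?_, ih.alpha_top, ih.skolem, ih.det0, ih.notUnsat, ih.confl⟩
    show (List.take (k + 1) (c0 :: cs)).length = (List.take (k + 1) (d0 :: ds)).length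
    have hlen := ih.len_eq
    simp only [List.length_cons] at hlen
    simp only [List.length_take, List.length_cons]
    omega
  | inductiveRefinement C D χ α L σ ya hya =>
    refine ⟨ih.lenC, ih.lenD, ih.len_eq, ih.alpha_top, ih.skolem, ?_,
      fun h => (by cases h), ih.confl⟩
    intro w hw σ' hσ' hχ'
    exact ih.det0 w hw σ' hσ' hχ'.1
  | failed C D χ α L σ h =>
    exact absurd (hf (restrX σ)) (h _)

lemma inv_init {X Y : Type} [DecidableEq X] [DecidableEq Y] {φ : Set (Clause X Y)}
    {f : (X → Bool) → (Y → Bool)} (hf : ∀ xa, satCnf (combine xa (f xa)) φ) :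
    IDInv f (initState φ) := by
  refine ⟨by simp [initState], by simp [initState], rfl, fun _ => trivial, hf, ?_,
    fun h => (by cases h), fun L σ h => (by cases h)⟩
  intro v hv
  exfalso
  have hv' : (Sum.inr v : X ⊕ Y) ∈ Set.range Sum.inl := hv
  obtain ⟨x, hx⟩ := hv'
  cases hx

lemma inv_reach {X Y : Type} [DecidableEq X] [DecidableEq Y] {φ : Set (Clause X Y)}
    {f : (X → Bool) → (Y → Bool)} (hf : ∀ xa, satCnf (combine xa (f xa)) φ)
    {s : IDState X Y} (h : ReachableIRF φ s) : IDInv f s := by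
  have h' : Relation.ReflTransGen (StepIRF φ) (initState φ) s := h
  clear h
  induction h' with
  | refl => exact inv_init hf
  | tail _ hstep ih => exact inv_step hf hstep ih

end SoundnessAux


/-- If Φ is true, no state with status UNSAT is reachable via basic ID plus
InductiveRefinement and Failed. -/
theorem stmt_12 {X Y : Type} [Fintype X] [Fintype Y] [DecidableEq X] [DecidableEq Y]
    (φ : Set (Clause X Y)) (hφfin : φ.Finite)
    (hφY : ∀ c ∈ φ, ∃ l ∈ c, ∃ y : Y, l.1 = Sum.inr y)
    (htrue : qbfTrue φ) :
    ¬ ∃ s : IDState X Y, ReachableIRF φ s ∧ s.status = Status.unsat := by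
  obtain ⟨f, hf⟩ := htrue
  rintro ⟨s, hreach, hstat⟩
  exact (inv_reach hf hreach).notUnsat hstat
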